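/- Let 0 < μ < 1 and define p_n = C(μ, n) / 2^μ, so that ((1+x)/2)^μ = ∑_{n=0}^∞ p_n x^n for |x| < 1. Then ∑_{n=0}^∞ p_n = 1. -/

import Mathlib

/-- Generalized binomial coefficient C(α, n) = α(α-1)⋯(α-n+1)/n! for real α. -/
noncomputable def genBinom (α : ℝ) (n : ℕ) : ℝ :=
  (∏ i ∈ Finset.range n, (α - i)) / n.factorial



lemma genBinom_rec (α : ℝ) (n : ℕ) :
    ((n:ℝ)+1) * genBinom α (n+1) = (α - n) * genBinom α n := by
  unfold genBinom
  rw [Finset.prod_range_succ, Nat.factorial_succ]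
  push_cast
  have h1 : (n.factorial : ℝ) ≠ 0 := Nat.cast_ne_zero.2 n.factorial_ne_zero
  field_simp

lemma genBinom_absRec {μ : ℝ} (hμ1 : μ < 1) (n : ℕ) (hn : 1 ≤ n) :
    ((n:ℝ)+1) * |genBinom μ (n+1)| = ((n:ℝ) - μ) * |genBinom μ n| := by
  have h := genBinom_rec μ n
  have hn' : μ ≤ (n:ℝ) := hμ1.le.trans (by exact_mod_cast hn)
  have h2 := congrArg abs h
  rw [abs_mul, abs_mul, abs_of_nonneg (by positivity : (0:ℝ) ≤ (n:ℝ)+1),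
    abs_of_nonpos (by linarith : μ - (n:ℝ) ≤ 0)] at h2
  linarith [h2]

lemma genBinom_abs_one {μ : ℝ} (hμ0 : 0 < μ) : |genBinom μ 1| = μ := by
  simp [genBinom, abs_of_nonneg hμ0.le]

lemma genBinom_abs_le_one {μ : ℝ} (hμ0 : 0 < μ) (hμ1 : μ < 1) : ∀ n, |genBinom μ n| ≤ 1 := by
  intro n
  induction n with
  | zero => simp [genBinom]
  | succ k ih =>
    rcases Nat.eq_zero_or_pos k with rfl | hk
    · rw [genBinom_abs_one hμ0]; linarith
    · have h := genBinom_absRec hμ1 k hk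
      have hk1 : (1:ℝ) ≤ (k:ℝ) := by exact_mod_cast hk
      nlinarith [abs_nonneg (genBinom μ (k+1)), abs_nonneg (genBinom μ k)]

lemma summable_abs_genBinom {μ : ℝ} (hμ0 : 0 < μ) (hμ1 : μ < 1) :
    Summable (fun n => |genBinom μ n|) := by
  set f : ℕ → ℝ := fun j => ((j:ℝ)+1) * |genBinom μ (j+1)| with hf
  have key : ∀ N, ∑ i ∈ Finset.range N, μ * |genBinom μ (i+1)| ≤ μ := by
    intro N
    have tel : ∀ i ∈ Finset.range N,
        μ * |genBinom μ (i+1)| = f i - f (i+1) := by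
      intro i _
      have h := genBinom_absRec hμ1 (i+1) (Nat.le_add_left 1 i)
      simp only [hf]
      push_cast at h ⊢
      linarith
    rw [Finset.sum_congr rfl tel, Finset.sum_range_sub']
    have hfN : (0:ℝ) ≤ f N := by positivity
    have hf0 : f 0 = μ := by simp [hf, genBinom_abs_one hμ0]
    linarith
  have hsum : Summable (fun i => μ * |genBinom μ (i+1)|) :=
    summable_of_sum_range_le (fun n => by positivity) key
  have hsum2 : Summable (fun i => |genBinom μ (i+1)|) := by
    have h := hsum.mul_left μ⁻¹
    simpa [← mul_assoc, inv_mul_cancel₀ hμ0.ne'] using h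
  exact (summable_nat_add_iff 1).mp hsum2




section
variable {μ : ℝ}

/-- summability of the derivative series with uniform bound -/
lemma genBinom_summable_deriv_bound {r : ℝ} (hr0 : 0 < r) (hr1 : r < 1) :
    Summable (fun n : ℕ => (n:ℝ) * r ^ (n-1)) := by
  have h : Summable (fun n : ℕ => r⁻¹ * ((n:ℝ)^1 * r ^ n)) :=
    (summable_pow_mul_geometric_of_norm_lt_one (R := ℝ) 1
      (by rwa [Real.norm_eq_abs, abs_of_pos hr0])).mul_left _
  refine h.congr fun n => ?_
  cases n with
  | zero => simp
  | succ k => simp [pow_succ, pow_one]; field_simp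

lemma genBinom_hasDerivAt_g (hμ0 : 0 < μ) (hμ1 : μ < 1) {x : ℝ} (hx : x ∈ Set.Ioo (-1:ℝ) 1) :
    HasDerivAt (fun z => ∑' n : ℕ, genBinom μ n * z ^ n)
      (∑' n : ℕ, genBinom μ n * ((n:ℝ) * x ^ (n-1))) x := by
  set r : ℝ := (1 + |x|)/2 with hrdef
  have hxr : |x| < r := by
    rw [hrdef]; have := abs_lt.2 ⟨hx.1, hx.2⟩; linarith [abs_lt.2 ⟨hx.1, hx.2⟩]
  have hr0 : 0 < r := by positivity
  have hr1 : r < 1 := by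
    have := abs_lt.2 ⟨hx.1, hx.2⟩; rw [hrdef]; linarith
  apply hasDerivAt_tsum_of_isPreconnected (𝕜 := ℝ)
    (u := fun n : ℕ => (n:ℝ) * r ^ (n-1)) (genBinom_summable_deriv_bound hr0 hr1)
    (isOpen_Ioo (a := -r) (b := r)) (convex_Ioo _ _).isPreconnected
    (g' := fun (n : ℕ) (y : ℝ) => genBinom μ n * ((n:ℝ) * y ^ (n-1))) (y₀ := 0)
    (fun n y _ => (hasDerivAt_pow n y).const_mul _)
    ?_ (by exact ⟨by linarith, by linarith⟩) ?_ (abs_lt.1 hxr)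
  · intro n y hy
    have hb := genBinom_abs_le_one hμ0 hμ1 n
    have hyr : |y| ≤ r := (abs_lt.2 ⟨hy.1, hy.2⟩).le
    rw [Real.norm_eq_abs, abs_mul, abs_mul, abs_of_nonneg (n.cast_nonneg : (0:ℝ) ≤ n)]
    calc |genBinom μ n| * ((n:ℝ) * |y ^ (n-1)|)
        ≤ 1 * ((n:ℝ) * r ^ (n-1)) := by
          apply mul_le_mul hb ?_ (by positivity) zero_le_one
          apply mul_le_mul_of_nonneg_left ?_ (n.cast_nonneg)
          rw [abs_pow]
          exact pow_le_pow_left₀ (abs_nonneg y) hyr _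
      _ = (n:ℝ) * r ^ (n-1) := one_mul _
  · apply summable_of_ne_finset_zero (s := {0})
    intro n hn
    simp only [Finset.mem_singleton] at hn
    simp [zero_pow hn]
end




section
variable {μ : ℝ}

lemma genBinom_summable_geom_aux (hμ0 : 0 < μ) (hμ1 : μ < 1) {x : ℝ} (hx : |x| < 1) :
    Summable (fun n : ℕ => genBinom μ n * x ^ n) := by
  apply Summable.of_norm_bounded (summable_geometric_of_lt_one (abs_nonneg x) hx)
  intro n
  rw [Real.norm_eq_abs, abs_mul, abs_pow]
  exact mul_le_of_le_one_left (by positivity) (genBinom_abs_le_one hμ0 hμ1 n)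

lemma genBinom_summable_deriv_aux (hμ0 : 0 < μ) (hμ1 : μ < 1) {x : ℝ} (hx : |x| < 1) :
    Summable (fun n : ℕ => genBinom μ n * ((n:ℝ) * x ^ (n-1))) := by
  set r : ℝ := (1 + |x|)/2 with hrdef
  have hxr : |x| < r := by rw [hrdef]; linarith
  have hr0 : 0 < r := by positivity
  have hr1 : r < 1 := by rw [hrdef]; linarith
  apply Summable.of_norm_bounded (genBinom_summable_deriv_bound hr0 hr1)
  intro n
  rw [Real.norm_eq_abs, abs_mul, abs_mul, abs_of_nonneg (n.cast_nonneg : (0:ℝ) ≤ n), abs_pow]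
  calc |genBinom μ n| * ((n:ℝ) * |x| ^ (n-1))
      ≤ 1 * ((n:ℝ) * r ^ (n-1)) := by
        apply mul_le_mul (genBinom_abs_le_one hμ0 hμ1 n) ?_ (by positivity) zero_le_one
        exact mul_le_mul_of_nonneg_left (pow_le_pow_left₀ (abs_nonneg x) hxr.le _) n.cast_nonneg
    _ = (n:ℝ) * r ^ (n-1) := one_mul _

/-- the ODE: (1+x) g' = μ g -/
lemma genBinom_ode_identity (hμ0 : 0 < μ) (hμ1 : μ < 1) {x : ℝ} (hx : x ∈ Set.Ioo (-1:ℝ) 1) :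
    (1 + x) * (∑' n : ℕ, genBinom μ n * ((n:ℝ) * x ^ (n-1)))
      = μ * (∑' n : ℕ, genBinom μ n * x ^ n) := by
  have hx1 : |x| < 1 := abs_lt.2 ⟨hx.1, hx.2⟩
  set D := ∑' n : ℕ, genBinom μ n * ((n:ℝ) * x ^ (n-1)) with hD
  set G := ∑' n : ℕ, genBinom μ n * x ^ n with hG
  have hsD : HasSum (fun n : ℕ => genBinom μ n * ((n:ℝ) * x ^ (n-1))) D :=
    (genBinom_summable_deriv_aux hμ0 hμ1 hx1).hasSum
  have hsG : HasSum (fun n : ℕ => genBinom μ n * x ^ n) G :=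
    (genBinom_summable_geom_aux hμ0 hμ1 hx1).hasSum
  -- x * D = ∑ n * B n * x^n
  have hxD : HasSum (fun n : ℕ => (n:ℝ) * genBinom μ n * x ^ n) (x * D) := by
    refine (hsD.mul_left x).congr_fun fun n => ?_
    cases n with
    | zero => simp
    | succ k => rw [Nat.add_sub_cancel, pow_succ]; ring
  -- shifted: D = ∑ B(n+1) (n+1) x^n
  have hshift : HasSum (fun n : ℕ => genBinom μ (n+1) * (((n:ℝ)+1) * x ^ n)) D := by
    have h1 := (hasSum_nat_add_iff' (f := fun n : ℕ => genBinom μ n * ((n:ℝ) * x ^ (n-1))) 1).2 hsD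
    norm_num at h1
    refine h1.congr_fun fun n => ?_
    try simp only [Nat.add_sub_cancel]
    try push_cast
    try ring
  -- rewrite shifted using recurrence: = ∑ (μ - n) B n x^n = μ B n x^n - n B n x^n
  have hshift2 : HasSum (fun n : ℕ => μ * (genBinom μ n * x ^ n) - (n:ℝ) * genBinom μ n * x ^ n) D := by
    refine hshift.congr_fun fun n => ?_
    have h := genBinom_rec μ n
    have : genBinom μ (n+1) * (((n:ℝ)+1) * x ^ n) = (((n:ℝ)+1) * genBinom μ (n+1)) * x ^ n := by ring
    rw [this, h]; ring
  have hfinal : HasSum (fun n : ℕ => μ * (genBinom μ n * x ^ n)) (D + x * D) := by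
    have := hshift2.add hxD
    refine this.congr_fun fun n => ?_
    ring
  have h2 : HasSum (fun n : ℕ => μ * (genBinom μ n * x ^ n)) (μ * G) := hsG.mul_left μ
  have := hfinal.unique h2
  linarith [this]

/-- g x = (1+x)^μ on (-1,1) -/
lemma genBinom_g_eq_rpow (hμ0 : 0 < μ) (hμ1 : μ < 1) {x : ℝ} (hx : x ∈ Set.Ioo (-1:ℝ) 1) :
    (∑' n : ℕ, genBinom μ n * x ^ n) = (1 + x) ^ μ := by
  set g : ℝ → ℝ := fun z => ∑' n : ℕ, genBinom μ n * z ^ n with hg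
  have key : ∀ y ∈ Set.Ioo (-1:ℝ) 1, HasDerivAt (fun z => g z * (1 + z) ^ (-μ)) 0 y := by
    intro y hy
    have hy1 : (0:ℝ) < 1 + y := by linarith [hy.1]
    have hgd : HasDerivAt g (∑' n : ℕ, genBinom μ n * ((n:ℝ) * y ^ (n-1))) y :=
      genBinom_hasDerivAt_g hμ0 hμ1 hy
    have hrd : HasDerivAt (fun z : ℝ => (1 + z) ^ (-μ)) (-μ * (1 + y) ^ (-μ - 1)) y := by
      have h1 : HasDerivAt (fun z : ℝ => 1 + z) 1 y := (hasDerivAt_id y).const_add 1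
      have h2 := (Real.hasDerivAt_rpow_const (x := 1 + y) (p := -μ) (Or.inl hy1.ne')).comp y h1
      simpa [Function.comp_def] using h2
    have hmul : HasDerivAt (fun z => g z * (1 + z) ^ (-μ)) _ y := hgd.mul hrd
    convert hmul using 1
    have hode := genBinom_ode_identity hμ0 hμ1 hy
    set D := ∑' n : ℕ, genBinom μ n * ((n:ℝ) * y ^ (n-1))
    have hpow : (1 + y) ^ (-μ - 1) * (1 + y) = (1 + y) ^ (-μ) := by
      conv_rhs => rw [show (-μ:ℝ) = (-μ-1)+1 by ring, Real.rpow_add hy1, Real.rpow_one]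
    have hμg : μ * g y = (1 + y) * D := (hode).symm
    have h3 : D * (1 + y) ^ (-μ) + g y * (-μ * (1 + y) ^ (-μ - 1))
        = (1 + y) ^ (-μ - 1) * ((1 + y) * D - μ * g y) := by
      rw [← hpow]; ring
    rw [h3, ← hμg]
    simp
  have hconst : g x * (1 + x) ^ (-μ) = g 0 * (1 + (0:ℝ)) ^ (-μ) :=
    Convex.is_const_of_fderivWithin_eq_zero (𝕜 := ℝ) (convex_Ioo (-1:ℝ) 1)
      (f := fun z => g z * (1 + z) ^ (-μ))
      (fun y hy => ((key y hy).differentiableAt).differentiableWithinAt)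
      (fun y hy => by
        rw [fderivWithin_of_isOpen (isOpen_Ioo) hy, (key y hy).hasFDerivAt.fderiv]
        ext z
        simp)
      hx ⟨by norm_num, by norm_num⟩
  have hg0 : g 0 = 1 := by
    show (∑' n : ℕ, genBinom μ n * (0:ℝ) ^ n) = 1
    rw [tsum_eq_single 0 (fun n hn => by simp [zero_pow hn])]
    simp [genBinom]
  have hx1 : (0:ℝ) < 1 + x := by linarith [hx.1]
  have h1 : g x * (1 + x) ^ (-μ) = 1 := by
    rw [hconst, hg0]; norm_num
  have h2 : (1 + x) ^ (-μ) * (1 + x) ^ μ = 1 := by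
    rw [← Real.rpow_add hx1]; simp
  show g x = (1 + x) ^ μ
  calc g x = g x * ((1 + x) ^ (-μ) * (1 + x) ^ μ) := by rw [h2, mul_one]
    _ = (g x * (1 + x) ^ (-μ)) * (1 + x) ^ μ := by ring
    _ = (1 + x) ^ μ := by rw [h1, one_mul]
end




theorem stmt_5 (μ : ℝ) (hμ0 : 0 < μ) (hμ1 : μ < 1) :
    HasSum (fun n : ℕ => genBinom μ n / (2 : ℝ) ^ μ) 1 := by
  have hsum : Summable (fun n => genBinom μ n) :=
    (summable_abs_genBinom hμ0 hμ1).of_abs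
  set l := ∑' n, genBinom μ n with hl
  have hs : HasSum (fun n => genBinom μ n) l := hsum.hasSum
  -- Abel's limit theorem
  have habel : Filter.Tendsto (fun x : ℝ => ∑' n : ℕ, genBinom μ n * x ^ n)
      (nhdsWithin 1 (Set.Iio 1)) (nhds l) :=
    Real.tendsto_tsum_powerSeries_nhdsWithin_lt hs.tendsto_sum_nat
  -- the function equals (1+x)^μ near 1 from the left
  have hmem : Set.Ioo (-1:ℝ) 1 ∈ nhdsWithin 1 (Set.Iio 1) := by
    rw [mem_nhdsWithin]
    exact ⟨Set.Ioi (-1), isOpen_Ioi, by norm_num, fun y hy => ⟨hy.1, hy.2⟩⟩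
  have heq : ∀ᶠ x in nhdsWithin 1 (Set.Iio 1),
      (∑' n : ℕ, genBinom μ n * x ^ n) = (1 + x) ^ μ :=
    Filter.eventually_of_mem hmem (fun x hx => genBinom_g_eq_rpow hμ0 hμ1 hx)
  have hcont : Filter.Tendsto (fun x : ℝ => (1 + x) ^ μ)
      (nhdsWithin 1 (Set.Iio 1)) (nhds ((2:ℝ) ^ μ)) := by
    have : ContinuousAt (fun x : ℝ => (1 + x) ^ μ) 1 := by
      apply ContinuousAt.rpow_const
      · exact (continuous_const.add continuous_id).continuousAt
      · left; norm_num
    have h2 := this.continuousWithinAt (s := Set.Iio 1)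
    simpa [show (1:ℝ) + 1 = 2 by norm_num] using h2.tendsto
  have habel2 : Filter.Tendsto (fun x : ℝ => (1 + x) ^ μ)
      (nhdsWithin 1 (Set.Iio 1)) (nhds l) := habel.congr' heq
  have : l = (2:ℝ) ^ μ := tendsto_nhds_unique habel2 hcont
  have h2pos : (0:ℝ) < (2:ℝ) ^ μ := Real.rpow_pos_of_pos (by norm_num) μ
  have := hs.div_const ((2:ℝ) ^ μ)
  rw [‹l = (2:ℝ) ^ μ›, div_self h2pos.ne'] at this
  exact this
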